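/- arXiv:2204.08052 — 5 statements merged into one kernel-verified Lean document; each statement's English description precedes it below -/
import Mathlib

section
/- For N ≥ 2, the homomorphism sending each braid generator to 1 ∈ ℤ gives an abelianization of the braid group: there is a group isomorphism from the abelianization of B_N onto ℤ which sends the class of each generator σ_i to 1. -/
/-- The braid relations on `m` generators `σ_0, …, σ_{m-1}`:
commutation `σ_i σ_j = σ_j σ_i` when `|i - j| ≥ 2`, and
the Yang–Baxter relation `σ_i σ_{i+1} σ_i = σ_{i+1} σ_i σ_{i+1}`. -/
def braidRels (m : ℕ) : Set (FreeGroup (Fin m)) :=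
  {r | (∃ i j : Fin m, 2 ≤ |(i : ℤ) - (j : ℤ)| ∧
          r = FreeGroup.of i * FreeGroup.of j * (FreeGroup.of i)⁻¹ * (FreeGroup.of j)⁻¹) ∨
       (∃ i j : Fin m, (j : ℕ) = (i : ℕ) + 1 ∧
          r = FreeGroup.of i * FreeGroup.of j * FreeGroup.of i *
              (FreeGroup.of j * FreeGroup.of i * FreeGroup.of j)⁻¹)}

/-- The braid group on `N` strands, presented by the `N - 1` generators
`σ_0, …, σ_{N-2}` subject to the braid relations. -/
def BraidGroup (N : ℕ) : Type := PresentedGroup (braidRels (N - 1))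

instance (N : ℕ) : Group (BraidGroup N) := by unfold BraidGroup; infer_instance

/-- The `i`-th braid generator `σ_i` of the braid group on `N` strands. -/
def braidGen {N : ℕ} (i : Fin (N - 1)) : BraidGroup N := PresentedGroup.of i

lemma braid_rel_yb {N : ℕ} (i j : Fin (N - 1)) (hij : (j : ℕ) = (i : ℕ) + 1) :
    braidGen (N := N) i * braidGen j * braidGen i = braidGen j * braidGen i * braidGen j := by
  have h : (FreeGroup.of i * FreeGroup.of j * FreeGroup.of i *
      (FreeGroup.of j * FreeGroup.of i * FreeGroup.of j)⁻¹ : FreeGroup (Fin (N-1)))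
      ∈ braidRels (N - 1) := Or.inr ⟨i, j, hij, rfl⟩
  have h2 : (QuotientGroup.mk (FreeGroup.of i * FreeGroup.of j * FreeGroup.of i *
      (FreeGroup.of j * FreeGroup.of i * FreeGroup.of j)⁻¹) :
      PresentedGroup (braidRels (N-1))) = 1 := by
    apply (QuotientGroup.eq_one_iff _).2
    exact Subgroup.subset_normalClosure h
  rw [QuotientGroup.mk_mul, QuotientGroup.mk_inv, mul_inv_eq_one] at h2
  exact h2

/-- For `N ≥ 2`, the homomorphism sending each braid generator to `1 ∈ ℤ` realizes the
abelianization of the braid group: the abelianization of `B_N` is isomorphic to `ℤ`,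
with the class of each generator `σ_i` mapped to `1`. -/
theorem braid_abelianization_eq_int (N : ℕ) (hN : 2 ≤ N) :
    ∃ e : Abelianization (BraidGroup N) ≃* Multiplicative ℤ,
      ∀ i : Fin (N - 1),
        e (Abelianization.of (braidGen i)) = Multiplicative.ofAdd 1 := by
  have hpos : 0 < N - 1 := by omega
  have hrel : ∀ r ∈ braidRels (N - 1),
      FreeGroup.lift (fun _ : Fin (N-1) => (Multiplicative.ofAdd (1:ℤ))) r = 1 := by
    rintro r (⟨i, j, _, rfl⟩ | ⟨i, j, _, rfl⟩) <;>
      simp [mul_comm, mul_assoc, ← ofAdd_add]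
  let φ' : BraidGroup N →* Multiplicative ℤ := PresentedGroup.toGroup hrel
  let φ : Abelianization (BraidGroup N) →* Multiplicative ℤ := Abelianization.lift φ'
  let σ0 : Fin (N-1) := ⟨0, hpos⟩
  let ψ : Multiplicative ℤ →* Abelianization (BraidGroup N) :=
    zpowersHom _ (Abelianization.of (braidGen σ0))
  have key : ∀ i : Fin (N-1), Abelianization.of (braidGen (N := N) i)
      = Abelianization.of (braidGen σ0) := by
    intro i
    obtain ⟨n, hn⟩ := i
    induction n with
    | zero => rfl
    | succ k ih =>
      have hk : k < N - 1 := by omega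
      have hrel := braid_rel_yb (N := N) ⟨k, hk⟩ ⟨k+1, hn⟩ rfl
      have h1 := congrArg Abelianization.of hrel
      simp only [map_mul] at h1
      set a := Abelianization.of (braidGen (N := N) ⟨k, hk⟩) with ha
      set b := Abelianization.of (braidGen (N := N) ⟨k+1, hn⟩) with hb
      have hab : a = b := by
        have h2 : a * (b * a) = b * (b * a) := by
          calc a * (b * a) = a * b * a := by rw [mul_assoc]
          _ = b * a * b := h1
          _ = b * (b * a) := by rw [mul_assoc, mul_comm a b]
        exact mul_right_cancel h2
      rw [← hab]; exact ih hk
  have hφgen : ∀ i : Fin (N-1), φ (Abelianization.of (braidGen i)) = Multiplicative.ofAdd 1 := by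
    intro i
    show Abelianization.lift φ' (Abelianization.of (braidGen i)) = _
    rw [Abelianization.lift_apply_of]
    exact PresentedGroup.toGroup.of hrel
  have hψ1 : ψ (Multiplicative.ofAdd 1) = Abelianization.of (braidGen σ0) := by
    simp [ψ]
  refine ⟨MonoidHom.toMulEquiv φ ψ ?_ ?_, hφgen⟩
  · apply Abelianization.hom_ext
    have : ∀ x : Fin (N-1),
        ((ψ.comp φ).comp Abelianization.of) (PresentedGroup.of x)
          = (MonoidHom.id _).comp Abelianization.of (PresentedGroup.of x) := by
      intro x
      show ψ (φ (Abelianization.of (braidGen x))) = Abelianization.of (braidGen x)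
      rw [hφgen x, hψ1, key x]
    exact PresentedGroup.ext this
  · ext
    show φ (ψ (Multiplicative.ofAdd 1)) = Multiplicative.ofAdd 1
    rw [hψ1, hφgen σ0]
end

section
/- Let n ≥ 1 and let Ψ : ℝ → Matrix (Fin n) (Fin n) ℂ be continuously differentiable with Ψ(t) invertible for every t, and suppose the eigenframe closes up to a permutation: Ψ(2π) = P_σ * Ψ(0), where P_σ is the permutation matrix of a permutation σ of Fin n. Then the global biorthogonal Berry phase factor equals the parity of the permutation: exp( ∫_0^{2π} trace( (Ψ(t))⁻¹ * Ψ′(t) ) dt ) = sign(σ), where sign(σ) ∈ {+1, −1} is viewed as a complex number. -/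
open Matrix Real

/-- The permutation matrix of `σ ∈ Perm (Fin n)`, with `(i, j)` entry `1` if `i = σ j`
and `0` otherwise. -/
noncomputable def permMatrix (n : ℕ) (σ : Equiv.Perm (Fin n)) : Matrix (Fin n) (Fin n) ℂ :=
  Matrix.of fun i j => if i = σ j then 1 else 0

lemma trace_adjugate_mul {n : ℕ} (A B : Matrix (Fin n) (Fin n) ℂ) :
    (A.adjugate * B).trace = ∑ i, (A.updateCol i fun k => B k i).det := by
  have h : ∀ i, (A.updateCol i fun k => B k i).det = ∑ j, A.adjugate i j * B j i := by
    intro i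
    rw [← Matrix.cramer_apply, Matrix.cramer_eq_adjugate_mulVec]
    simp [Matrix.mulVec, dotProduct]
  simp [h, Matrix.trace, Matrix.mul_apply, Matrix.diag]

lemma prod_updateColumn {n : ℕ} (A : Matrix (Fin n) (Fin n) ℂ) (b : Fin n → ℂ)
    (i : Fin n) (σ : Equiv.Perm (Fin n)) :
    ∏ j, (A.updateCol i b) (σ j) j =
      b (σ i) * ∏ j ∈ Finset.univ.erase i, A (σ j) j := by
  rw [← Finset.mul_prod_erase Finset.univ _ (Finset.mem_univ i)]
  congr 1
  · simp [Matrix.updateCol_apply]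
  · refine Finset.prod_congr rfl fun j hj => ?_
    simp [Matrix.updateCol_apply, (Finset.mem_erase.mp hj).1]

lemma jacobi_formula {n : ℕ} (Ψ Ψ' : ℝ → Matrix (Fin n) (Fin n) ℂ) (t : ℝ)
    (hderiv : ∀ i j, HasDerivAt (fun s => Ψ s i j) (Ψ' t i j) t) :
    HasDerivAt (fun s => (Ψ s).det) (((Ψ t).adjugate * Ψ' t).trace) t := by
  have h1 : HasDerivAt (fun s => ∑ σ : Equiv.Perm (Fin n),
      (Equiv.Perm.sign σ : ℂ) * ∏ i, Ψ s (σ i) i)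
      (∑ σ : Equiv.Perm (Fin n), (Equiv.Perm.sign σ : ℂ) *
        ∑ i, (∏ j ∈ Finset.univ.erase i, Ψ t (σ j) j) • Ψ' t (σ i) i) t := by
    refine HasDerivAt.fun_sum fun σ _ => HasDerivAt.const_mul _ ?_
    exact HasDerivAt.fun_finsetProd fun i _ => hderiv (σ i) i
  have hfun : (fun s => (Ψ s).det) = fun s => ∑ σ : Equiv.Perm (Fin n),
      (Equiv.Perm.sign σ : ℂ) * ∏ i, Ψ s (σ i) i := by
    funext s
    rw [Matrix.det_apply']
  rw [hfun]
  convert h1 using 1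
  rw [trace_adjugate_mul]
  have hdet : ∀ i, ((Ψ t).updateCol i fun k => Ψ' t k i).det =
      ∑ σ : Equiv.Perm (Fin n), (Equiv.Perm.sign σ : ℂ) *
        (Ψ' t (σ i) i * ∏ j ∈ Finset.univ.erase i, Ψ t (σ j) j) := by
    intro i
    rw [Matrix.det_apply']
    refine Finset.sum_congr rfl fun σ _ => ?_
    rw [prod_updateColumn]
  simp only [hdet, smul_eq_mul, Finset.mul_sum]
  rw [Finset.sum_comm]
  refine Finset.sum_congr rfl fun σ _ => Finset.sum_congr rfl fun i _ => by ring

/-- **Global biorthogonal Berry phase equals the parity of the eigenvalue permutation.**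
If the continuously differentiable frame of eigenvectors `Ψ` (with entrywise derivative
`Ψ'`, invertible at every `t`) closes up to a permutation, `Ψ(2π) = P_σ Ψ(0)`, then
`exp (∫_0^{2π} trace (Ψ(t)⁻¹ Ψ'(t)) dt) = sign σ`, i.e. the global biorthogonal Berry
phase factor `exp(iΘ)` equals the parity of the permutation `σ`. -/
theorem berry_phase_factor_eq_perm_sign (n : ℕ) (hn : 1 ≤ n)
    (Ψ Ψ' : ℝ → Matrix (Fin n) (Fin n) ℂ)
    (hderiv : ∀ i j t, HasDerivAt (fun s => Ψ s i j) (Ψ' t i j) t)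
    (hcont : ∀ i j, Continuous fun t => Ψ' t i j)
    (hinv : ∀ t, IsUnit (Ψ t))
    (σ : Equiv.Perm (Fin n))
    (hper : Ψ (2 * π) = permMatrix n σ * Ψ 0) :
    Complex.exp (∫ t in (0:ℝ)..(2 * π), ((Ψ t)⁻¹ * Ψ' t).trace) =
      ((Equiv.Perm.sign σ : ℤ) : ℂ) := by
  classical
  have hcΨ : ∀ i j, Continuous fun t => Ψ t i j := fun i j =>
    continuous_iff_continuousAt.mpr fun t => (hderiv i j t).continuousAt
  have hcM : Continuous Ψ := continuous_matrix fun i j => hcΨ i j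
  have hcdet : Continuous fun t => (Ψ t).det := hcM.matrix_det
  have hdetne : ∀ t, (Ψ t).det ≠ 0 := fun t =>
    ((Matrix.isUnit_iff_isUnit_det _).mp (hinv t)).ne_zero
  set g : ℝ → ℂ := fun t => ((Ψ t)⁻¹ * Ψ' t).trace with hg
  have hginv : ∀ t : ℝ, (Ψ t)⁻¹ = ((Ψ t).det)⁻¹ • (Ψ t).adjugate := fun t => by
    rw [Matrix.inv_def, Ring.inverse_eq_inv']
  have hgrw : g = fun t => ((Ψ t).det)⁻¹ * ((Ψ t).adjugate * Ψ' t).trace := by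
    funext t
    rw [hg]
    simp [hginv t, Matrix.smul_mul, Matrix.trace_smul]
  have hgc : Continuous g := by
    rw [hgrw]
    exact (hcdet.inv₀ hdetne).mul
      ((hcM.matrix_adjugate.matrix_mul (continuous_matrix hcont)).matrix_trace)
  set F : ℝ → ℂ := fun t => ∫ s in (0:ℝ)..t, g s with hF
  have hFd : ∀ t, HasDerivAt F (g t) t := fun t =>
    (hgc.integral_hasStrictDerivAt 0 t).hasDerivAt
  have hfd : ∀ t, HasDerivAt (fun s => (Ψ s).det) ((Ψ t).det * g t) t := by
    intro t
    have hJ := jacobi_formula Ψ Ψ' t (fun i j => hderiv i j t)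
    convert hJ using 1
    rw [hgrw]
    rw [← mul_assoc, mul_inv_cancel₀ (hdetne t), one_mul]
  have hh : ∀ t, HasDerivAt (fun s => (Ψ s).det * Complex.exp (-(F s))) 0 t := by
    intro t
    have h1 : HasDerivAt (fun s => (Ψ s).det * Complex.exp (-(F s)))
        ((Ψ t).det * g t * Complex.exp (-(F t)) + (Ψ t).det * (Complex.exp (-(F t)) * -g t)) t :=
      (hfd t).mul ((hFd t).neg.cexp)
    convert h1 using 1
    ring
  have hconst : (Ψ (2 * π)).det * Complex.exp (-(F (2 * π))) =
      (Ψ 0).det * Complex.exp (-(F 0)) :=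
    is_const_of_deriv_eq_zero (fun t => (hh t).differentiableAt)
      (fun t => (hh t).deriv) _ _
  have hF0 : F 0 = 0 := by simp [hF]
  have hdp : (permMatrix n σ).det = ((Equiv.Perm.sign σ : ℤ) : ℂ) := by
    have heq : permMatrix n σ = (σ.permMatrix ℂ)ᵀ := by
      ext i j
      simp [permMatrix, Equiv.Perm.permMatrix, PEquiv.toMatrix_apply,
        Equiv.toPEquiv_apply, eq_comm]
    rw [heq, Matrix.det_transpose, Matrix.det_permutation]
  have hdet2π : (Ψ (2 * π)).det = ((Equiv.Perm.sign σ : ℤ) : ℂ) * (Ψ 0).det := by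
    rw [hper, Matrix.det_mul, hdp]
  rw [hdet2π, hF0] at hconst
  simp only [neg_zero, Complex.exp_zero, mul_one] at hconst
  have hs : ((Equiv.Perm.sign σ : ℤ) : ℂ) * Complex.exp (-(F (2 * π))) = 1 := by
    refine mul_left_cancel₀ (hdetne 0) ?_
    linear_combination hconst
  rw [Complex.exp_neg] at hs
  have hexp := Complex.exp_ne_zero (F (2 * π))
  field_simp at hs
  exact hs.symm
end

section
/- (G-symmetry–protected quantized Berry phase.) Let n ≥ 1, and let ψα, ψβ : ℝ → ℂⁿ be continuously differentiable, 2π-periodic maps with ⟪ψα(φ), ψβ(φ)⟫ = 1 for all φ. Let G be an n×n complex matrix with G†·G = 1 and G·G = 1 (a unitary twofold point-group operator), and suppose there are differentiable functions ρα, ρβ : ℝ → ℂ such that for all φ, G·ψα(φ) = ρα(φ)·ψα(−φ) and G·ψβ(φ) = ρβ(φ)·ψβ(−φ). Then the Berry phase θ^{αβ} = −i ∫_{−π}^{π} ⟪ψα(φ), ψβ′(φ)⟫ dφ satisfies exp(i θ^{αβ}) = ρα(0)·ρα(π); moreover ρα(0) and ρα(π) each square to 1, i.e. they are the G-parities ±1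 of the states at the two G-invariant points, so the Berry phase is quantized to 0 or π modulo 2π. -/
open Matrix Real

set_option maxRecDepth 8000

/-- The standard Hermitian inner product `⟪x, y⟫ = Σᵢ conj (x i) * y i` on `ℂⁿ`,
conjugate-linear in the first argument. -/
noncomputable def herm {n : ℕ} (x y : Fin n → ℂ) : ℂ :=
  ∑ i, starRingEnd ℂ (x i) * y i

lemma herm_eq_dot {n : ℕ} (x y : Fin n → ℂ) : herm x y = star x ⬝ᵥ y := rfl

lemma herm_unitary {n : ℕ} {G : Matrix (Fin n) (Fin n) ℂ} (hG : Gᴴ * G = 1)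
    (x y : Fin n → ℂ) : herm (G.mulVec x) (G.mulVec y) = herm x y := by
  rw [herm_eq_dot, herm_eq_dot, Matrix.star_mulVec, Matrix.dotProduct_mulVec,
    Matrix.vecMul_vecMul, hG, Matrix.vecMul_one]

lemma herm_smul_left {n : ℕ} (a : ℂ) (x y : Fin n → ℂ) :
    herm (a • x) y = starRingEnd ℂ a * herm x y := by
  simp [herm, Finset.mul_sum, mul_assoc]

lemma herm_smul_right {n : ℕ} (a : ℂ) (x y : Fin n → ℂ) :
    herm x (a • y) = a * herm x y := by
  simp only [herm, Pi.smul_apply, smul_eq_mul, Finset.mul_sum]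
  exact Finset.sum_congr rfl fun i _ => by ring

lemma herm_sub_right {n : ℕ} (x y z : Fin n → ℂ) :
    herm x (y - z) = herm x y - herm x z := by
  simp only [herm, Pi.sub_apply, mul_sub, Finset.sum_sub_distrib]

/-- **G-symmetry–protected quantized Berry phase.**
For a self-closed (2π-periodic, continuously differentiable) normalized pair of
eigenvector families `ψα, ψβ` along a `G`-symmetric loop, with a twofold unitary
point-group operator `G` relating the states at `φ` and `-φ` via
`G ψ(φ) = ρ(φ) ψ(-φ)`, the Berry phase `θ^{αβ} = -i ∫_{-π}^{π} ⟪ψα, ψβ'⟫ dφ` satisfies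
`exp(i θ^{αβ}) = ρα(0) ρα(π)`, and `ρα(0), ρα(π)` are the `G`-parities `±1` of the
states at the two `G`-invariant points, so the Berry phase is quantized to `0` or `π`
modulo `2π`. -/
theorem G_protected_quantized_berry_phase (n : ℕ) (hn : 1 ≤ n)
    (ψα ψβ ψα' ψβ' : ℝ → Fin n → ℂ)
    (hdα : ∀ i t, HasDerivAt (fun s => ψα s i) (ψα' t i) t)
    (hdβ : ∀ i t, HasDerivAt (fun s => ψβ s i) (ψβ' t i) t)
    (hcα : ∀ i, Continuous fun t => ψα' t i)
    (hcβ : ∀ i, Continuous fun t => ψβ' t i)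
    (hperα : ∀ φ, ψα (φ + 2 * π) = ψα φ)
    (hperβ : ∀ φ, ψβ (φ + 2 * π) = ψβ φ)
    (hnorm : ∀ φ, herm (ψα φ) (ψβ φ) = 1)
    (G : Matrix (Fin n) (Fin n) ℂ)
    (hG1 : Gᴴ * G = 1) (hG2 : G * G = 1)
    (ρα ρβ : ℝ → ℂ)
    (hρα : Differentiable ℝ ρα) (hρβ : Differentiable ℝ ρβ)
    (hGα : ∀ φ, G.mulVec (ψα φ) = ρα φ • ψα (-φ))
    (hGβ : ∀ φ, G.mulVec (ψβ φ) = ρβ φ • ψβ (-φ)) :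
    Complex.exp (∫ φ in (-π)..π, herm (ψα φ) (ψβ' φ)) = ρα 0 * ρα π ∧
      (ρα 0) ^ 2 = 1 ∧ (ρα π) ^ 2 = 1 := by
  set c := starRingEnd ℂ with hc
  -- continuity of the families
  have contα : ∀ i, Continuous fun t => ψα t i := fun i =>
    continuous_iff_continuousAt.mpr fun t => (hdα i t).continuousAt
  -- parity squares
  have key : ∀ φ : ℝ, ψα (-φ) = ψα φ → (ρα φ) ^ 2 = 1 := by
    intro φ hsym
    have h1 : G.mulVec (G.mulVec (ψα φ)) = (ρα φ ^ 2) • ψα φ := by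
      rw [hGα φ, hsym, Matrix.mulVec_smul, hGα φ, hsym, smul_smul, sq]
    have h2 : G.mulVec (G.mulVec (ψα φ)) = ψα φ := by
      rw [Matrix.mulVec_mulVec, hG2, Matrix.one_mulVec]
    have h3 : herm ((ρα φ ^ 2) • ψα φ) (ψβ φ) = herm (ψα φ) (ψβ φ) := by
      rw [← h1, h2]
    rw [herm_smul_left, hnorm] at h3
    have h4 : c (ρα φ ^ 2) = 1 := by simpa using h3
    have := congrArg c h4
    simpa [hc, Complex.conj_conj] using this
  have hψαπ : ψα (-π) = ψα π := by
    have := hperα (-π)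
    rw [show -π + 2 * π = π by ring] at this
    exact this.symm
  have hsq0 : (ρα 0) ^ 2 = 1 := key 0 (by rw [neg_zero])
  have hsqπ : (ρα π) ^ 2 = 1 := key π hψαπ
  -- relation between ρα and ρβ
  have hρrel : ∀ φ, c (ρα φ) * ρβ φ = 1 := by
    intro φ
    have h := herm_unitary hG1 (ψα φ) (ψβ φ)
    rw [hGα, hGβ, herm_smul_left, herm_smul_right, hnorm, hnorm] at h
    simpa [hc] using h
  -- derivative of the symmetry relation for β
  have hGβ' : ∀ φ, G.mulVec (ψβ' φ) =
      deriv ρβ φ • ψβ (-φ) - ρβ φ • ψβ' (-φ) := by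
    intro φ
    funext i
    have hL : HasDerivAt (fun s => (G.mulVec (ψβ s)) i) ((G.mulVec (ψβ' φ)) i) φ := by
      have : ∀ j ∈ Finset.univ, HasDerivAt (fun s => G i j * ψβ s j)
          (G i j * ψβ' φ j) φ := fun j _ => (hdβ j φ).const_mul _
      have := HasDerivAt.fun_sum this
      simpa [Matrix.mulVec, dotProduct] using this
    have hneg : ∀ j, HasDerivAt (fun s : ℝ => ψβ (-s) j) (-(ψβ' (-φ) j)) φ := by
      intro j
      have h1 := HasDerivAt.scomp (𝕜 := ℝ) (𝕜' := ℝ) (x := φ)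
        (g₁ := fun s => ψβ s j) (hg := hdβ j (-φ)) (hh := hasDerivAt_neg φ)
      exact h1.congr_deriv (by simp)
    have hR : HasDerivAt (fun s => (ρβ s • ψβ (-s)) i)
        (deriv ρβ φ * ψβ (-φ) i + ρβ φ * (-(ψβ' (-φ) i))) φ :=
      ((hρβ φ).hasDerivAt).mul (hneg i)
    have heq : (fun s => (G.mulVec (ψβ s)) i) = fun s => (ρβ s • ψβ (-s)) i := by
      funext s; rw [hGβ s]
    rw [heq] at hL
    have := hL.unique hR
    simp only [Pi.sub_apply, Pi.smul_apply, smul_eq_mul]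
    rw [this]; ring
  -- key identity: A φ + A (-φ) = conj(ρα φ) * ρβ' φ
  have hkey : ∀ φ, herm (ψα φ) (ψβ' φ) + herm (ψα (-φ)) (ψβ' (-φ))
      = c (ρα φ) * deriv ρβ φ := by
    intro φ
    have h := herm_unitary hG1 (ψα φ) (ψβ' φ)
    rw [hGα, hGβ' φ, herm_smul_left, herm_sub_right, herm_smul_right,
      herm_smul_right, hnorm] at h
    have h2 := hρrel φ
    linear_combination -h - herm (ψα (-φ)) (ψβ' (-φ)) * h2
  -- the Berry connection and its primitive
  set A : ℝ → ℂ := fun φ => herm (ψα φ) (ψβ' φ) with hA_def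
  have hA : Continuous A := by
    have : Continuous fun φ => ∑ i, starRingEnd ℂ (ψα φ i) * ψβ' φ i := by
      apply continuous_finset_sum
      intro i _
      exact ((continuous_star.comp (contα i))).mul (hcβ i)
    exact this
  have hAneg : Continuous fun φ => A (-φ) := hA.comp continuous_neg
  set B : ℝ → ℂ := fun φ => A φ + A (-φ) with hB_def
  have hB : Continuous B := hA.add hAneg
  set F : ℝ → ℂ := fun x => ∫ t in (0:ℝ)..x, B t with hF_def
  have hF : ∀ x, HasDerivAt F (B x) x := fun x =>
    (hB.integral_hasStrictDerivAt 0 x).hasDerivAt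
  -- the auxiliary function ρβ · exp(-F) has zero derivative
  have hu : ∀ x, HasDerivAt (fun y => ρβ y * Complex.exp (-F y)) 0 x := by
    intro x
    have h2 : HasDerivAt (fun y => Complex.exp (-F y))
        (Complex.exp (-F x) * (-(B x))) x := ((hF x).neg).cexp
    have h3 := ((hρβ x).hasDerivAt).mul h2
    have hBx : ρβ x * B x = deriv ρβ x := by
      have hk := hkey x
      have h2' := hρrel x
      have : B x = c (ρα x) * deriv ρβ x := hk
      linear_combination ρβ x * this + deriv ρβ x * h2'
    refine HasDerivAt.congr_deriv h3 ?_
    have : deriv ρβ x * Complex.exp (-F x) + ρβ x * (Complex.exp (-F x) * -B x)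
        = Complex.exp (-F x) * (deriv ρβ x - ρβ x * B x) := by ring
    rw [this, hBx]
    simp
  have hconst : ρβ π * Complex.exp (-F π) = ρβ 0 * Complex.exp (-F 0) :=
    is_const_of_deriv_eq_zero (fun x => (hu x).differentiableAt)
      (fun x => (hu x).deriv) π 0
  have hF0 : F 0 = 0 := intervalIntegral.integral_same
  rw [hF0, neg_zero, Complex.exp_zero, mul_one] at hconst
  -- the full-loop integral equals F π
  have hint1 : IntervalIntegrable A MeasureTheory.volume (-π) 0 :=
    hA.intervalIntegrable _ _
  have hint2 : IntervalIntegrable A MeasureTheory.volume 0 π :=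
    hA.intervalIntegrable _ _
  have hadd := intervalIntegral.integral_add_adjacent_intervals hint1 hint2
  have hneg : (∫ φ in (0:ℝ)..π, A (-φ)) = ∫ φ in (-π)..(0:ℝ), A φ := by
    simpa using intervalIntegral.integral_comp_neg (a := (0:ℝ)) (b := π) A
  have hFπ : F π = ∫ φ in (-π)..π, A φ := by
    have hsum : F π = (∫ φ in (0:ℝ)..π, A φ) + ∫ φ in (0:ℝ)..π, A (-φ) :=
      intervalIntegral.integral_add hint2 (hAneg.intervalIntegrable _ _)
    rw [hsum, hneg, add_comm, hadd]
  -- compute exp(F π) from hconst using the parities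
  have hexp : Complex.exp (∫ φ in (-π)..π, A φ) = ρα 0 * ρα π := by
    rw [← hFπ]
    have hρβπ : ρβ π = ρβ 0 * Complex.exp (F π) := by
      have := congrArg (fun z => z * Complex.exp (F π)) hconst
      simpa [mul_assoc, ← Complex.exp_add] using this
    have h0 := hρrel 0
    have hπ := hρrel π
    have e0 := mul_self_eq_one_iff.mp (show ρα 0 * ρα 0 = 1 by rw [← pow_two]; exact hsq0)
    have eπ := mul_self_eq_one_iff.mp (show ρα π * ρα π = 1 by rw [← pow_two]; exact hsqπ)
    rcases e0 with e0 | e0 <;> rcases eπ with eπ | eπ <;>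
      rw [e0] at h0 <;> rw [eπ] at hπ <;> rw [e0, eπ] <;>
      simp only [hc, starRingEnd_apply, star_one, star_neg] at h0 hπ <;>
      first
        | linear_combination -hρβπ - Complex.exp (F π) * h0 + hπ
        | linear_combination -hρβπ - Complex.exp (F π) * h0 - hπ
        | linear_combination hρβπ - Complex.exp (F π) * h0 - hπ
        | linear_combination hρβπ - Complex.exp (F π) * h0 + hπ
  exact ⟨hexp, hsq0, hsqπ⟩
end

section
/- (GT-symmetry–protected quantized Berry phase.) Let n ≥ 1, and let ψ : ℝ → ℂⁿ be continuously differentiable and 2π-periodic with ⟪ψ(φ), ψ(φ)⟫ = 1 for all φ. Let τ be an n×n complex matrix with τ†·τ = 1 and τ·conj(τ) = 1 (a symmetric unitary, so the antiunitary operation squares to the identity), and suppose there is a differentiable function ρ : ℝ → ℂ such that for all φ, τ·conj(ψ(φ)) = ρ(φ)·ψ(φ) (the state in the GT-invariant subspace is mapped to itself). Then exp( 2 ∫_{−π}^{π} ⟪ψ(φ), ψ′(φ)⟫ dφ ) = 1; equivalently, the Berry phase θ = −i ∫_{−π}^{π} ⟪ψ(φ), ψ′(φ)⟫ dφ is real and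 quantized to 0 or π modulo 2π. -/
open Matrix Real

private lemma hasDerivAt_conj' (f : ℝ → ℂ) (f' : ℂ) (t : ℝ) (hf : HasDerivAt f f' t) :
    HasDerivAt (fun s => starRingEnd ℂ (f s)) (starRingEnd ℂ f') t :=
  Complex.conjCLE.hasFDerivAt.comp_hasDerivAt t hf

/-- **GT-symmetry–protected quantized Berry phase.**
For a self-closed (2π-periodic, continuously differentiable) normalized eigenvector
family `ψ` along a loop in the `GT`-invariant subspace, with a symmetric unitary `τ`
(`τ† τ = 1`, `τ conj(τ) = 1`, so the antiunitary operation squares to the identity)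
mapping the state to itself, `τ conj(ψ(φ)) = ρ(φ) ψ(φ)`, one has
`exp (2 ∫_{-π}^{π} ⟪ψ, ψ'⟫ dφ) = 1`: the Berry phase
`θ = -i ∫_{-π}^{π} ⟪ψ, ψ'⟫ dφ` is real and quantized to `0` or `π` modulo `2π`. -/
theorem GT_protected_quantized_berry_phase (n : ℕ) (hn : 1 ≤ n)
    (ψ ψ' : ℝ → Fin n → ℂ)
    (hd : ∀ i t, HasDerivAt (fun s => ψ s i) (ψ' t i) t)
    (hc : ∀ i, Continuous fun t => ψ' t i)
    (hper : ∀ φ, ψ (φ + 2 * π) = ψ φ)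
    (hnorm : ∀ φ, herm (ψ φ) (ψ φ) = 1)
    (τ : Matrix (Fin n) (Fin n) ℂ)
    (hτ1 : τᴴ * τ = 1) (hτ2 : τ * τ.map (starRingEnd ℂ) = 1)
    (ρ : ℝ → ℂ) (hρ : Differentiable ℝ ρ)
    (hGT : ∀ φ, τ.mulVec (fun i => starRingEnd ℂ (ψ φ i)) = ρ φ • ψ φ) :
    Complex.exp (2 * ∫ φ in (-π)..π, herm (ψ φ) (ψ' φ)) = 1 := by
  have hψc : ∀ i, Continuous fun t => ψ t i := fun i =>
    continuous_iff_continuousAt.mpr fun t => (hd i t).continuousAt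
  set A : ℝ → ℂ := fun φ => herm (ψ φ) (ψ' φ) with hAdef
  have hAc : Continuous A := by
    unfold A
    unfold herm
    exact continuous_finset_sum _ fun i _ =>
      (Complex.continuous_conj.comp (hψc i)).mul (hc i)
  -- conj A = -A
  have hAim : ∀ φ, starRingEnd ℂ (A φ) = - A φ := by
    intro φ
    have h1 : HasDerivAt (fun s => herm (ψ s) (ψ s))
        (∑ i, (starRingEnd ℂ (ψ' φ i) * ψ φ i + starRingEnd ℂ (ψ φ i) * ψ' φ i)) φ := by
      unfold herm
      exact HasDerivAt.fun_sum fun i _ =>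
        (hasDerivAt_conj' _ _ _ (hd i φ)).mul (hd i φ)
    have hfun : (fun s => herm (ψ s) (ψ s)) = fun _ => (1 : ℂ) := funext hnorm
    have h0 : (∑ i, (starRingEnd ℂ (ψ' φ i) * ψ φ i + starRingEnd ℂ (ψ φ i) * ψ' φ i)) = 0 := by
      rw [hfun] at h1
      exact h1.unique (hasDerivAt_const φ 1)
    have hsplit : starRingEnd ℂ (A φ) + A φ = 0 := by
      rw [← h0]
      unfold A
      unfold herm
      rw [map_sum, Finset.sum_add_distrib]
      congr 1
      refine Finset.sum_congr rfl fun i _ => ?_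
      rw [_root_.map_mul, Complex.conj_conj]
      ring
    linear_combination hsplit
  -- τ is symmetric
  have hsym : ∀ i j, τ j i = τ i j := by
    have h : τᴴ = τ.map (starRingEnd ℂ) := by
      calc τᴴ = τᴴ * (τ * τ.map (starRingEnd ℂ)) := by rw [hτ2, mul_one]
        _ = (τᴴ * τ) * τ.map (starRingEnd ℂ) := by rw [mul_assoc]
        _ = τ.map (starRingEnd ℂ) := by rw [hτ1, one_mul]
    intro i j
    have h2 : τᴴ i j = τ.map (starRingEnd ℂ) i j := by rw [h]
    simp only [Matrix.conjTranspose_apply, Matrix.map_apply] at h2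
    exact star_injective h2
  -- ρ never vanishes
  have hρne : ∀ φ, ρ φ ≠ 0 := by
    intro φ h0
    have h1 := hGT φ
    rw [h0, zero_smul] at h1
    have h2 : (fun i => starRingEnd ℂ (ψ φ i)) = 0 := by
      have h3 := congrArg (fun v => τᴴ.mulVec v) h1
      simpa [Matrix.mulVec_mulVec, hτ1] using h3
    have h4 := hnorm φ
    unfold herm at h4
    have h5 : ∀ i, starRingEnd ℂ (ψ φ i) = 0 := fun i => congrFun h2 i
    simp [h5] at h4
  -- the ODE: deriv ρ = -2 ρ A
  have hODE : ∀ φ, deriv ρ φ = -2 * ρ φ * A φ := by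
    intro φ
    have hco : ∀ i, ∑ j, τ i j * starRingEnd ℂ (ψ' φ j)
        = deriv ρ φ * ψ φ i + ρ φ * ψ' φ i := by
      intro i
      have hL : HasDerivAt (fun s => ∑ j, τ i j * starRingEnd ℂ (ψ s j))
          (∑ j, τ i j * starRingEnd ℂ (ψ' φ j)) φ :=
        HasDerivAt.fun_sum fun j _ => (hasDerivAt_conj' _ _ _ (hd j φ)).const_mul (τ i j)
      have hR : HasDerivAt (fun s => ρ s * ψ s i)
          (deriv ρ φ * ψ φ i + ρ φ * ψ' φ i) φ :=
        ((hρ φ).hasDerivAt).mul (hd i φ)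
      have heq : (fun s => ∑ j, τ i j * starRingEnd ℂ (ψ s j)) = fun s => ρ s * ψ s i := by
        funext s
        have h1 := congrFun (hGT s) i
        simpa [Matrix.mulVec, dotProduct, smul_eq_mul] using h1
      rw [heq] at hL
      exact hL.unique hR
    -- sum both sides against conj ψ
    have hRsum : ∑ i, starRingEnd ℂ (ψ φ i) * (deriv ρ φ * ψ φ i + ρ φ * ψ' φ i)
        = deriv ρ φ + ρ φ * A φ := by
      have h1 := hnorm φ
      unfold herm at h1
      unfold A
      unfold herm
      rw [Finset.sum_congr rfl (fun i _ => by ring :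
        ∀ i ∈ Finset.univ, starRingEnd ℂ (ψ φ i) * (deriv ρ φ * ψ φ i + ρ φ * ψ' φ i)
          = deriv ρ φ * (starRingEnd ℂ (ψ φ i) * ψ φ i)
            + ρ φ * (starRingEnd ℂ (ψ φ i) * ψ' φ i))]
      rw [Finset.sum_add_distrib, ← Finset.mul_sum, ← Finset.mul_sum, h1, mul_one]
    have hLsum : ∑ i, starRingEnd ℂ (ψ φ i) * (∑ j, τ i j * starRingEnd ℂ (ψ' φ j))
        = - (ρ φ * A φ) := by
      calc ∑ i, starRingEnd ℂ (ψ φ i) * (∑ j, τ i j * starRingEnd ℂ (ψ' φ j))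
          = ∑ i, ∑ j, starRingEnd ℂ (ψ' φ j) * (τ i j * starRingEnd ℂ (ψ φ i)) := by
            refine Finset.sum_congr rfl fun i _ => ?_
            rw [Finset.mul_sum]
            exact Finset.sum_congr rfl fun j _ => by ring
        _ = ∑ j, starRingEnd ℂ (ψ' φ j) * (∑ i, τ j i * starRingEnd ℂ (ψ φ i)) := by
            rw [Finset.sum_comm]
            refine Finset.sum_congr rfl fun j _ => ?_
            rw [Finset.mul_sum]
            exact Finset.sum_congr rfl fun i _ => by rw [hsym i j]
        _ = ∑ j, starRingEnd ℂ (ψ' φ j) * (ρ φ * ψ φ j) := by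
            refine Finset.sum_congr rfl fun j _ => ?_
            congr 1
            have h1 := congrFun (hGT φ) j
            simpa [Matrix.mulVec, dotProduct, smul_eq_mul] using h1
        _ = ρ φ * ∑ j, starRingEnd ℂ (ψ' φ j) * ψ φ j := by
            rw [Finset.mul_sum]
            exact Finset.sum_congr rfl fun j _ => by ring
        _ = ρ φ * starRingEnd ℂ (A φ) := by
            congr 1
            unfold A
            unfold herm
            rw [map_sum]
            exact Finset.sum_congr rfl fun j _ => by
              rw [_root_.map_mul, Complex.conj_conj]; ring
        _ = - (ρ φ * A φ) := by rw [hAim φ]; ring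
    have hmain : - (ρ φ * A φ) = deriv ρ φ + ρ φ * A φ := by
      rw [← hLsum, ← hRsum]
      exact Finset.sum_congr rfl fun i _ => by rw [hco i]
    linear_combination -hmain
  -- the integral function
  set L : ℝ → ℂ := fun φ => ∫ x in (-π)..φ, A x with hLdef
  have hLd : ∀ φ, HasDerivAt L (A φ) φ := fun φ =>
    (hAc.integral_hasStrictDerivAt (-π) φ).hasDerivAt
  set F : ℝ → ℂ := fun φ => ρ φ * Complex.exp (2 * L φ) with hFdef
  have hFd : ∀ φ, HasDerivAt F 0 φ := by
    intro φ
    have hE : HasDerivAt (fun s => Complex.exp (2 * L s))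
        (Complex.exp (2 * L φ) * (2 * A φ)) φ := ((hLd φ).const_mul 2).cexp
    have hF1 : HasDerivAt F
        (deriv ρ φ * Complex.exp (2 * L φ) + ρ φ * (Complex.exp (2 * L φ) * (2 * A φ))) φ :=
      ((hρ φ).hasDerivAt).mul hE
    have h0 : deriv ρ φ * Complex.exp (2 * L φ) + ρ φ * (Complex.exp (2 * L φ) * (2 * A φ)) = 0 := by
      rw [hODE φ]; ring
    rwa [h0] at hF1
  have hconst : F π = F (-π) :=
    is_const_of_deriv_eq_zero (fun φ => (hFd φ).differentiableAt)
      (fun φ => (hFd φ).deriv) π (-π)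
  have hL0 : L (-π) = 0 := intervalIntegral.integral_same
  have hψπ : ψ π = ψ (-π) := by
    have := hper (-π)
    rw [show -π + 2 * π = π by ring] at this
    exact this
  have hρper : ρ π = ρ (-π) := by
    have h1 := hGT π
    have h2 := hGT (-π)
    rw [hψπ] at h1
    rw [h1] at h2
    -- h2 : ρ π • ψ (-π) = ρ (-π) • ψ (-π)
    have h3 : herm (ψ (-π)) (ρ π • ψ (-π)) = herm (ψ (-π)) (ρ (-π) • ψ (-π)) := by rw [h2]
    have key : ∀ c : ℂ, herm (ψ (-π)) (c • ψ (-π)) = c := by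
      intro c
      have h4 := hnorm (-π)
      unfold herm at h4 ⊢
      calc ∑ i, starRingEnd ℂ (ψ (-π) i) * (c • ψ (-π)) i
          = c * ∑ i, starRingEnd ℂ (ψ (-π) i) * ψ (-π) i := by
            rw [Finset.mul_sum]
            exact Finset.sum_congr rfl fun i _ => by
              simp [smul_eq_mul]; ring
        _ = c := by rw [h4, mul_one]
    rw [key, key] at h3
    exact h3
  have hfin : ρ (-π) * Complex.exp (2 * L π) = ρ (-π) * 1 := by
    have h1 : ρ π * Complex.exp (2 * L π) = ρ (-π) * Complex.exp (2 * L (-π)) := hconst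
    rw [hρper, hL0] at h1
    simpa using h1
  have := mul_left_cancel₀ (hρne (-π)) hfin
  exact this
end

section
/- (GT-†–symmetry–protected quantized Berry phase.) Let n ≥ 1, and let ψ^R, ψ^L : ℝ → ℂⁿ be continuously differentiable, 2π-periodic maps with ⟪ψ^L(φ), ψ^R(φ)⟫ = 1 for all φ. Let τ be an n×n complex matrix with τ†·τ = 1 and τ·conj(τ) = 1, and suppose there are differentiable, nowhere-vanishing functions ρ^R, ρ^L : ℝ → ℂ such that for all φ, τ·conj(ψ^R(φ)) = ρ^R(φ)·ψ^L(φ) and τ·conj(ψ^L(φ)) = ρ^L(φ)·ψ^R(φ). Set I = ∫_{−π}^{π} ⟪ψ^L(φ), (ψ^R)′(φ)⟫ dφ. Then exp( I − conj(I) ) = 1; equivalently, the real part of the biorthogonal Berry phase θ^{LR} = −i·I is quantized to an integer multiple of π. -/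
open Matrix Real

lemma herm_conj {n : ℕ} (x y : Fin n → ℂ) :
    starRingEnd ℂ (herm x y) = herm y x := by
  simp [herm, map_sum, mul_comm]

lemma herm_mulVec {n : ℕ} (A : Matrix (Fin n) (Fin n) ℂ) (h : Aᴴ * A = 1)
    (x y : Fin n → ℂ) : herm (A.mulVec x) (A.mulVec y) = herm x y := by
  rw [herm_eq_dot, herm_eq_dot, star_mulVec, dotProduct_mulVec, vecMul_vecMul, h, vecMul_one]

lemma conj_mulVec {n : ℕ} (A : Matrix (Fin n) (Fin n) ℂ) (v : Fin n → ℂ) :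
    (fun j => starRingEnd ℂ (A.mulVec v j)) =
      (A.map (starRingEnd ℂ)).mulVec (fun i => starRingEnd ℂ (v i)) := by
  funext j
  simp [Matrix.mulVec, dotProduct, map_sum, Matrix.map_apply]

lemma tau_invol {n : ℕ} (A : Matrix (Fin n) (Fin n) ℂ)
    (h : A * A.map (starRingEnd ℂ) = 1) (v : Fin n → ℂ) :
    A.mulVec ((A.map (starRingEnd ℂ)).mulVec v) = v := by
  rw [mulVec_mulVec, h, one_mulVec]

lemma intervalIntegral_conj {f : ℝ → ℂ} {a b : ℝ} :
    (∫ x in a..b, starRingEnd ℂ (f x)) = starRingEnd ℂ (∫ x in a..b, f x) := by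
  simp [intervalIntegral, ← integral_conj, map_sub]

lemma herm_add_right {n : ℕ} (x y z : Fin n → ℂ) :
    herm x (y + z) = herm x y + herm x z := by
  simp [herm, Finset.sum_add_distrib, mul_add]

/-- **GT-†–symmetry–protected quantized Berry phase.**
For self-closed (2π-periodic, continuously differentiable) binormalized right/left
eigenvector families `ψR, ψL` along a loop in the `GT`-invariant subspace, with a
symmetric unitary `τ` (`τ† τ = 1`, `τ conj(τ) = 1`) exchanging right and left
eigenvectors of the same state via nowhere-vanishing factors `ρR, ρL`, the biorthogonal
Berry-phase integral `I = ∫_{-π}^{π} ⟪ψL, ψR'⟫ dφ` satisfies `exp (I - conj I) = 1`: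
the real part of the biorthogonal Berry phase `θ^{LR} = -i I` is quantized to an
integer multiple of `π`. -/
theorem GTdagger_protected_quantized_berry_phase (n : ℕ) (hn : 1 ≤ n)
    (ψR ψL ψR' ψL' : ℝ → Fin n → ℂ)
    (hdR : ∀ i t, HasDerivAt (fun s => ψR s i) (ψR' t i) t)
    (hdL : ∀ i t, HasDerivAt (fun s => ψL s i) (ψL' t i) t)
    (hcR : ∀ i, Continuous fun t => ψR' t i)
    (hcL : ∀ i, Continuous fun t => ψL' t i)
    (hperR : ∀ φ, ψR (φ + 2 * π) = ψR φ)
    (hperL : ∀ φ, ψL (φ + 2 * π) = ψL φ)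
    (hnorm : ∀ φ, herm (ψL φ) (ψR φ) = 1)
    (τ : Matrix (Fin n) (Fin n) ℂ)
    (hτ1 : τᴴ * τ = 1) (hτ2 : τ * τ.map (starRingEnd ℂ) = 1)
    (ρR ρL : ℝ → ℂ)
    (hρRd : Differentiable ℝ ρR) (hρLd : Differentiable ℝ ρL)
    (hρRne : ∀ φ, ρR φ ≠ 0) (hρLne : ∀ φ, ρL φ ≠ 0)
    (hGTR : ∀ φ, τ.mulVec (fun i => starRingEnd ℂ (ψR φ i)) = ρR φ • ψL φ)
    (hGTL : ∀ φ, τ.mulVec (fun i => starRingEnd ℂ (ψL φ i)) = ρL φ • ψR φ) :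
    Complex.exp ((∫ φ in (-π)..π, herm (ψL φ) (ψR' φ)) -
      starRingEnd ℂ (∫ φ in (-π)..π, herm (ψL φ) (ψR' φ))) = 1 := by
  set f : ℝ → ℂ := fun φ => herm (ψL φ) (ψR' φ) with hf
  -- continuity
  have hcψL : ∀ i, Continuous fun t => ψL t i := fun i =>
    continuous_iff_continuousAt.2 fun t => (hdL i t).continuousAt
  have hfc : Continuous f := by
    apply continuous_finset_sum
    intro i _
    exact (Complex.continuous_conj.comp (hcψL i)).mul (hcR i)
  -- nonvanishing of eigenvectors
  have hψRne : ∀ φ, ψR φ ≠ 0 := by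
    intro φ h
    have h1 := hnorm φ
    rw [h] at h1
    simp [herm] at h1
  have hψLne : ∀ φ, ψL φ ≠ 0 := by
    intro φ h
    have h1 := hnorm φ
    rw [h] at h1
    simp [herm] at h1
  -- conj ρR * ρL = 1
  have hρ1 : ∀ φ, starRingEnd ℂ (ρR φ) * ρL φ = 1 := by
    intro φ
    have e1 : τ.mulVec (fun j => starRingEnd ℂ
        ((τ.mulVec fun i => starRingEnd ℂ (ψR φ i)) j)) = ψR φ := by
      rw [conj_mulVec]
      have h : (fun i => starRingEnd ℂ (starRingEnd ℂ (ψR φ i))) = ψR φ := by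
        funext i; simp
      rw [h]
      exact tau_invol τ hτ2 (ψR φ)
    rw [hGTR φ] at e1
    have e2 : (fun j => starRingEnd ℂ ((ρR φ • ψL φ) j)) =
        starRingEnd ℂ (ρR φ) • fun j => starRingEnd ℂ (ψL φ j) := by
      funext j; simp
    rw [e2, mulVec_smul, hGTL φ, smul_smul] at e1
    obtain ⟨j, hj⟩ := Function.ne_iff.1 (hψRne φ)
    have hj' : ψR φ j ≠ 0 := by simpa using hj
    have e3 := congrFun e1 j
    rw [Pi.smul_apply, smul_eq_mul] at e3
    exact mul_right_cancel₀ hj' (e3.trans (one_mul _).symm)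
  have hρRconjL : ∀ φ, ρR φ * starRingEnd ℂ (ρL φ) = 1 := by
    intro φ
    have := congrArg (starRingEnd ℂ) (hρ1 φ)
    simpa using this
  -- periodicity of ρR
  have hρRper : ∀ φ, ρR (φ + 2 * π) = ρR φ := by
    intro φ
    have h1 := hGTR (φ + 2 * π)
    rw [hperR, hperL, hGTR φ] at h1
    obtain ⟨j, hj⟩ := Function.ne_iff.1 (hψLne φ)
    have hj' : ψL φ j ≠ 0 := by simpa using hj
    have e3 := congrFun h1 j
    rw [Pi.smul_apply, Pi.smul_apply, smul_eq_mul, smul_eq_mul] at e3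
    exact (mul_right_cancel₀ hj' e3).symm
  -- binormalization derivative
  have hsum0 : ∀ t, herm (ψL' t) (ψR t) + herm (ψL t) (ψR' t) = 0 := by
    intro t
    have h1 : HasDerivAt (fun s => herm (ψL s) (ψR s))
        (herm (ψL' t) (ψR t) + herm (ψL t) (ψR' t)) t := by
      have h2 : HasDerivAt (fun s => ∑ i, starRingEnd ℂ (ψL s i) * ψR s i)
          (∑ i, (starRingEnd ℂ (ψL' t i) * ψR t i + starRingEnd ℂ (ψL t i) * ψR' t i)) t :=
        HasDerivAt.fun_sum fun i _ => by
          simp only [starRingEnd_apply]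
          exact (hdL i t).star.mul (hdR i t)
      simpa [herm, Finset.sum_add_distrib] using h2
    have h3 : HasDerivAt (fun s => herm (ψL s) (ψR s)) 0 t := by
      have h : (fun s => herm (ψL s) (ψR s)) = fun _ => (1 : ℂ) := funext hnorm
      rw [h]; exact hasDerivAt_const t 1
    exact h1.unique h3
  -- derivative of the GT relation
  have hmv : ∀ (v : Fin n → ℂ) j, τ.mulVec v j = ∑ i, τ j i * v i := by
    intro v j; simp [Matrix.mulVec, dotProduct]
  have hderGT : ∀ t, τ.mulVec (fun i => starRingEnd ℂ (ψR' t i)) =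
      deriv ρR t • ψL t + ρR t • ψL' t := by
    intro t
    funext j
    have hL : HasDerivAt (fun s => ∑ i, τ j i * starRingEnd ℂ (ψR s i))
        (∑ i, τ j i * starRingEnd ℂ (ψR' t i)) t :=
      HasDerivAt.fun_sum fun i _ => by
        simp only [starRingEnd_apply]
        exact (hdR i t).star.const_mul (τ j i)
    have heq : (fun s => ∑ i, τ j i * starRingEnd ℂ (ψR s i)) =
        fun s => ρR s * ψL s j := by
      funext s
      have h := congrFun (hGTR s) j
      rw [hmv] at h
      simpa using h
    rw [heq] at hL
    have hR : HasDerivAt (fun s => ρR s * ψL s j)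
        (deriv ρR t * ψL t j + ρR t * ψL' t j) t :=
      ((hρRd t).hasDerivAt).mul (hdL j t)
    have h := hL.unique hR
    rw [hmv]
    simpa using h
  -- key identity : deriv ρR = 2 ρR conj(f)
  have hkey : ∀ t, deriv ρR t = 2 * ρR t * starRingEnd ℂ (f t) := by
    intro t
    have e0 : starRingEnd ℂ (f t) =
        herm (fun i => starRingEnd ℂ (ψL t i)) (fun i => starRingEnd ℂ (ψR' t i)) := by
      simp [hf, herm, map_sum, mul_comm]
    have e1 : starRingEnd ℂ (f t) =
        herm (τ.mulVec fun i => starRingEnd ℂ (ψL t i))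
             (τ.mulVec fun i => starRingEnd ℂ (ψR' t i)) := by
      rw [herm_mulVec τ hτ1]; exact e0
    rw [hGTL t, hderGT t] at e1
    rw [herm_smul_left, herm_add_right, herm_smul_right, herm_smul_right] at e1
    have eR : herm (ψR t) (ψL t) = 1 := by
      rw [← herm_conj, hnorm t]; simp
    have eR' : herm (ψR t) (ψL' t) = - starRingEnd ℂ (f t) := by
      have h := hsum0 t
      have h2 : herm (ψL' t) (ψR t) = - f t := by
        rw [hf]; linear_combination h
      calc herm (ψR t) (ψL' t) = starRingEnd ℂ (herm (ψL' t) (ψR t)) := (herm_conj _ _).symm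
        _ = - starRingEnd ℂ (f t) := by rw [h2]; simp
    rw [eR, eR'] at e1
    have hc : starRingEnd ℂ (ρL t) * ρR t = 1 := by
      linear_combination hρRconjL t
    have h2 : 2 * starRingEnd ℂ (f t) = starRingEnd ℂ (ρL t) * deriv ρR t := by
      linear_combination e1 - starRingEnd ℂ (f t) * hc
    linear_combination (- ρR t) * h2 - deriv ρR t * (hρRconjL t)
  have hρR' : ∀ t, HasDerivAt ρR (2 * ρR t * starRingEnd ℂ (f t)) t := by
    intro t
    have := (hρRd t).hasDerivAt
    rwa [hkey t] at this
  -- the primitive of conj f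
  have hfconj_cont : Continuous fun t => starRingEnd ℂ (f t) :=
    Complex.continuous_conj.comp hfc
  set K : ℝ → ℂ := fun φ => ∫ s in (-π)..φ, starRingEnd ℂ (f s) with hK
  have hKderiv : ∀ t, HasDerivAt K (starRingEnd ℂ (f t)) t := fun t =>
    intervalIntegral.integral_hasDerivAt_right
      (hfconj_cont.intervalIntegrable _ _)
      (hfconj_cont.stronglyMeasurableAtFilter _ _)
      hfconj_cont.continuousAt
  set G : ℝ → ℂ := fun φ => ρR φ * Complex.exp (-(2 * K φ)) with hG
  have hGd : ∀ t, HasDerivAt G 0 t := by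
    intro t
    have h1 : HasDerivAt (fun φ => Complex.exp (-(2 * K φ)))
        (Complex.exp (-(2 * K t)) * (-(2 * starRingEnd ℂ (f t)))) t := by
      have := (((hKderiv t).const_mul (2 : ℂ)).neg).cexp
      simpa [mul_comm] using this
    have h2 : HasDerivAt (fun φ => ρR φ * Complex.exp (-(2 * K φ))) _ t := (hρR' t).mul h1
    convert h2 using 1
    ring
  have hGconst := is_const_of_deriv_eq_zero
    (fun x => (hGd x).differentiableAt) (fun x => (hGd x).deriv) π (-π)
  have hKpi0 : K (-π) = 0 := intervalIntegral.integral_same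
  have hρπ : ρR π = ρR (-π) := by
    have h := hρRper (-π)
    rw [show -π + 2 * π = π by ring] at h
    exact h
  have hexp1 : Complex.exp (-(2 * K π)) = 1 := by
    have h := hGconst
    rw [hG] at h
    simp only [hKpi0] at h
    rw [hρπ] at h
    simp at h
    exact mul_left_cancel₀ (hρRne (-π)) (h.trans (mul_one _).symm)
  have hKpi : K π = starRingEnd ℂ (∫ φ in (-π)..π, f φ) := intervalIntegral_conj
  set I := ∫ φ in (-π)..π, f φ with hI
  have hexpI : Complex.exp (-(2 * starRingEnd ℂ I)) = 1 := by
    rw [← hKpi]; exact hexp1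
  have hre : I.re = 0 := by
    have h := congrArg (fun z : ℂ => ‖z‖) hexpI
    rw [Complex.norm_exp] at h
    simp only [norm_one] at h
    rw [Real.exp_eq_one_iff] at h
    have : (-(2 * starRingEnd ℂ I)).re = -(2 * I.re) := by
      simp [Complex.mul_re]
    rw [this] at h
    linarith
  have hfin : I - starRingEnd ℂ I = -(2 * starRingEnd ℂ I) := by
    apply Complex.ext
    · simp [Complex.mul_re, hre]
    · simp [Complex.mul_im, hre]; ring
  rw [hfin]
  exact hexpI
end
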